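/- Fix d and s with 0 < s < d, and for each divisor n of gcd(d,s) let ρ_n = C(d/n, s/n) (binomial coefficient). Then ρ_1 ≥ Σ_{n | gcd(d,s), n ≠ 1} (n² - n - 1) ρ_n. -/

import Mathlib

open Finset

/-- Superadditivity of binomial coefficients (from Vandermonde). -/
lemma choose_mul_le_choose_add (a b c e : ℕ) :
    Nat.choose a c * Nat.choose b e ≤ Nat.choose (a + b) (c + e) := by
  rw [Nat.add_choose_eq]
  exact Finset.single_le_sum (f := fun ij => Nat.choose a ij.1 * Nat.choose b ij.2)
    (fun i _ => Nat.zero_le _)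
    (show ((c, e)) ∈ Finset.HasAntidiagonal.antidiagonal (c + e) from Finset.HasAntidiagonal.mem_antidiagonal.2 rfl)

/-- `u ≤ C(u,v)` when `1 ≤ v < u`. -/
lemma le_choose_of_lt : ∀ u v : ℕ, 1 ≤ v → v < u → u ≤ Nat.choose u v := by
  intro u
  induction u with
  | zero => intro v hv h; omega
  | succ n ih =>
    intro v hv h
    match v, hv with
    | 1, _ => simp
    | (w+2), _ =>
      have key : Nat.choose (n+1) (w+2) = Nat.choose n (w+1) + Nat.choose n (w+2) :=
        Nat.choose_succ_succ n (w+1)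
      have h1 : n ≤ Nat.choose n (w+1) := ih (w+1) (by omega) (by omega)
      have h2 : 0 < Nat.choose n (w+2) := Nat.choose_pos (by omega)
      omega

/-- central-type step: `3·C(2m,m) ≤ C(2m+2, m+1)` for `m ≥ 1`. -/
lemma three_mul_central_le (m : ℕ) (hm : 1 ≤ m) :
    3 * Nat.choose (2 * m) m ≤ Nat.choose (2 * m + 2) (m + 1) := by
  obtain ⟨k, rfl⟩ : ∃ k, m = k + 1 := ⟨m - 1, by omega⟩
  show 3 * Nat.choose (2*k+2) (k+1) ≤ Nat.choose (2*k+4) (k+2)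
  have f1 : Nat.choose (2*k+3) (k+1) = Nat.choose (2*k+2) k + Nat.choose (2*k+2) (k+1) :=
    Nat.choose_succ_succ (2*k+2) k
  have f2 : Nat.choose (2*k+3) (k+2) = Nat.choose (2*k+3) (k+1) := by
    have := Nat.choose_symm (n := 2*k+3) (k := k+2) (by omega)
    rw [← this]; congr 1; omega
  have f3 : Nat.choose (2*k+4) (k+2) = Nat.choose (2*k+3) (k+1) + Nat.choose (2*k+3) (k+2) :=
    Nat.choose_succ_succ (2*k+3) (k+1)
  have f4 : Nat.choose (2*k+2) (k+1) * (k+1) = Nat.choose (2*k+2) k * (k+2) := by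
    have := Nat.choose_succ_right_eq (2*k+2) k
    rw [this]; congr 1; omega
  have f5 : Nat.choose (2*k+2) (k+1) ≤ 2 * Nat.choose (2*k+2) k := by
    have hpos : 0 < k + 1 := by omega
    have h : Nat.choose (2*k+2) (k+1) * (k+1) ≤ (2 * Nat.choose (2*k+2) k) * (k+1) := by
      rw [f4]; nlinarith [Nat.zero_le (Nat.choose (2*k+2) k)]
    exact Nat.le_of_mul_le_mul_right h hpos
  omega

/-- step lemma: `3·C(um, vm) ≤ C(u(m+1), v(m+1))` for `1 ≤ v < u`, `1 ≤ m`. -/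
lemma step_three (u v m : ℕ) (hv : 1 ≤ v) (huv : v < u) (hm : 1 ≤ m) :
    3 * Nat.choose (u * m) (v * m) ≤ Nat.choose (u * (m + 1)) (v * (m + 1)) := by
  have hu : u ≤ Nat.choose u v := le_choose_of_lt u v hv huv
  by_cases hc : 3 ≤ Nat.choose u v
  · have := choose_mul_le_choose_add (u * m) u (v * m) v
    calc 3 * Nat.choose (u * m) (v * m) ≤ Nat.choose (u * m) (v * m) * Nat.choose u v := by
          nlinarith [Nat.zero_le (Nat.choose (u * m) (v * m))]
      _ ≤ Nat.choose (u * m + u) (v * m + v) := this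
      _ = Nat.choose (u * (m + 1)) (v * (m + 1)) := by ring_nf
  · have hu2 : u = 2 := by omega
    have hv1 : v = 1 := by omega
    subst hu2 hv1
    have := three_mul_central_le m hm
    calc 3 * Nat.choose (2 * m) (1 * m) = 3 * Nat.choose (2 * m) m := by rw [one_mul]
      _ ≤ Nat.choose (2 * m + 2) (m + 1) := this
      _ = Nat.choose (2 * (m + 1)) (1 * (m + 1)) := by ring_nf

/-- chain: `3^k · C(um, vm) ≤ C(u(m+k), v(m+k))`. -/
lemma chain_three (u v m : ℕ) (hv : 1 ≤ v) (huv : v < u) (hm : 1 ≤ m) :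
    ∀ k : ℕ, 3 ^ k * Nat.choose (u * m) (v * m) ≤ Nat.choose (u * (m + k)) (v * (m + k)) := by
  intro k
  induction k with
  | zero => simp
  | succ k ih =>
    have hstep := step_three u v (m + k) hv huv (by omega)
    calc 3 ^ (k+1) * Nat.choose (u * m) (v * m)
        = 3 * (3 ^ k * Nat.choose (u * m) (v * m)) := by ring
      _ ≤ 3 * Nat.choose (u * (m + k)) (v * (m + k)) := by omega
      _ ≤ Nat.choose (u * ((m + k) + 1)) (v * ((m + k) + 1)) := hstep
      _ = Nat.choose (u * (m + (k+1))) (v * (m + (k+1))) := by ring_nf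

/-- special case: `10·C(u,v) ≤ C(3u, 3v)`. -/
lemma ten_mul_le (u v : ℕ) (hv : 1 ≤ v) (huv : v < u) :
    10 * Nat.choose u v ≤ Nat.choose (u * 3) (v * 3) := by
  have hu : u ≤ Nat.choose u v := le_choose_of_lt u v hv huv
  by_cases hc : 4 ≤ Nat.choose u v
  · set c := Nat.choose u v with hcdef
    have h1 : c * c ≤ Nat.choose (u + u) (v + v) := choose_mul_le_choose_add u u v v
    have h2 : Nat.choose (u + u) (v + v) * c ≤ Nat.choose ((u+u) + u) ((v+v) + v) :=
      choose_mul_le_choose_add (u+u) u (v+v) v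
    have h3 : Nat.choose ((u+u)+u) ((v+v)+v) = Nat.choose (u * 3) (v * 3) := by ring_nf
    nlinarith [Nat.zero_le (Nat.choose (u+u) (v+v))]
  · have hu3 : u ≤ 3 := by omega
    interval_cases u <;> interval_cases v <;> simp_all <;> decide

/-- `2(g²-g-1) ≤ 3^(g-1)` for `g ≥ 4`. -/
lemma arith_pow3 : ∀ k : ℕ, 2 * ((k+4)^2 - (k+4) - 1) ≤ 3 ^ (k+3) := by
  have key : ∀ k : ℕ, 2 * (k*k + 7*k + 11) ≤ 3 ^ (k+3) := by
    intro k
    induction k with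
    | zero => norm_num
    | succ k ih =>
      have h3 : 3 ^ (k+1+3) = 3 * 3 ^ (k+3) := by ring
      have expand : (k+1)*(k+1) + 7*(k+1) + 11 = k*k + 9*k + 19 := by ring
      rw [h3, expand]
      nlinarith [ih, sq_nonneg k]
  intro k
  have h : (k+4)^2 - (k+4) - 1 = k*k + 7*k + 11 := by
    have : (k+4)^2 = k*k + 8*k + 16 := by ring
    omega
  rw [h]; exact key k

/-- `2(n²-n-1)·2^(n-1) ≤ 9^(n-1)` for `n ≥ 2`. -/
lemma arith_pow9 (n : ℕ) (hn : 2 ≤ n) : 2 * (n^2 - n - 1) * 2 ^ (n-1) ≤ 9 ^ (n-1) := by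
  have key' : ∀ j : ℕ, 2 * ((j+1)*(j+1) + 3*(j+1) + 1) * 2 ^ (j+2) ≤ 9 ^ (j+2) := by
    intro j
    induction j with
    | zero => norm_num
    | succ j ih =>
      have e2 : (2:ℕ) ^ (j+1+2) = 2 * 2 ^ (j+2) := by ring
      have e9 : (9:ℕ) ^ (j+1+2) = 9 * 9 ^ (j+2) := by ring
      rw [e2, e9]
      nlinarith [ih, pow_pos (show (0:ℕ) < 2 by norm_num) (j+2), sq_nonneg j]
  have key : ∀ k : ℕ, 2 * (k*k + 3*k + 1) * 2 ^ (k+1) ≤ 9 ^ (k+1) := by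
    intro k
    match k with
    | 0 => norm_num
    | (j+1) =>
      have := key' j
      calc 2 * ((j+1)*(j+1) + 3*(j+1) + 1) * 2 ^ (j+1+1)
          = 2 * ((j+1)*(j+1) + 3*(j+1) + 1) * 2 ^ (j+2) := by ring_nf
        _ ≤ 9 ^ (j+2) := this
        _ = 9 ^ (j+1+1) := by ring_nf
  obtain ⟨k, rfl⟩ : ∃ k, n = k + 2 := ⟨n - 2, by omega⟩
  have h : (k+2)^2 - (k+2) - 1 = k*k + 3*k + 1 := by
    have : (k+2)^2 = k*k + 4*k + 4 := by ring
    omega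
  have h1 : (k+2) - 1 = k + 1 := by omega
  rw [h, h1]
  exact key k

/-- geometric halving: `∑_{n=2}^{K+1} A/2^(n-1) + A/2^K ≤ A`. -/
lemma halving_sum (A : ℕ) : ∀ K : ℕ,
    (∑ n ∈ Finset.Icc 2 (K+1), A / 2 ^ (n-1)) + A / 2 ^ K ≤ A := by
  intro K
  induction K with
  | zero => simp
  | succ K ih =>
    have htop : ∑ n ∈ Finset.Icc 2 (K+1+1), A / 2 ^ (n-1)
        = (∑ n ∈ Finset.Icc 2 (K+1), A / 2 ^ (n-1)) + A / 2 ^ (K+1+1-1) := by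
      exact Finset.sum_Icc_succ_top (by omega) _
    have hdd : A / 2 ^ (K+1) = (A / 2 ^ K) / 2 := by
      rw [Nat.div_div_eq_div_mul, pow_succ]
    have hx : A / 2 ^ (K+1) + A / 2 ^ (K+1) ≤ A / 2 ^ K := by
      rw [hdd]; omega
    rw [htop]
    have : K + 1 + 1 - 1 = K + 1 := by omega
    rw [this]
    omega

/-- top term bound: `2(g²-g-1)·C(u,v) ≤ C(ug, vg)` for `g ≥ 2`, `1 ≤ v < u`. -/
lemma top_bound (u v g : ℕ) (hv : 1 ≤ v) (huv : v < u) (hg : 2 ≤ g) :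
    2 * ((g^2 - g - 1) * Nat.choose u v) ≤ Nat.choose (u * g) (v * g) := by
  have hchain : ∀ k : ℕ, 3 ^ k * Nat.choose u v ≤ Nat.choose (u * (1 + k)) (v * (1 + k)) := by
    intro k
    have := chain_three u v 1 hv huv (le_refl 1) k
    simpa using this
  rcases Nat.lt_or_ge g 4 with h4 | h4
  · interval_cases g
    · -- g = 2
      have := hchain 1
      norm_num at this ⊢
      have e : u * (1+1) = u * 2 ∧ v * (1+1) = v * 2 := by omega
      omega
    · -- g = 3
      have := ten_mul_le u v hv huv
      norm_num
      omega
  · -- g ≥ 4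
    obtain ⟨k, rfl⟩ : ∃ k, g = k + 4 := ⟨g - 4, by omega⟩
    have ha := arith_pow3 k
    have hc := hchain (k + 3)
    have e : 1 + (k + 3) = k + 4 := by omega
    rw [e] at hc
    calc 2 * (((k+4)^2 - (k+4) - 1) * Nat.choose u v)
        = (2 * ((k+4)^2 - (k+4) - 1)) * Nat.choose u v := by ring
      _ ≤ 3 ^ (k+3) * Nat.choose u v := Nat.mul_le_mul_right _ ha
      _ ≤ Nat.choose (u * (k+4)) (v * (k+4)) := hc

/-- **Counting estimate (from Lemma 7.11).**
Fix `d` and `s` with `0 < s < d`, and for each divisor `n` of `gcd d s` let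
`ρ_n = C(d/n, s/n)`.  Then `ρ_1 ≥ Σ_{n ∣ gcd(d,s), n ≠ 1} (n² - n - 1) ρ_n`. -/
theorem stmt_15 (d s : ℕ) (hs : 0 < s) (hsd : s < d) :
    ∑ n ∈ (Nat.gcd d s).divisors.erase 1, (n ^ 2 - n - 1) * Nat.choose (d / n) (s / n) ≤
      Nat.choose d s := by
  set g := Nat.gcd d s with hgdef
  have hg0 : 0 < g := Nat.gcd_pos_of_pos_right d hs
  by_cases hg1 : g = 1
  · rw [hg1]
    simp
  have hg2 : 2 ≤ g := by omega
  set u := d / g with hudef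
  set v := s / g with hvdef
  have hdu : d = u * g := (Nat.div_mul_cancel (Nat.gcd_dvd_left d s)).symm
  have hsv : s = v * g := (Nat.div_mul_cancel (Nat.gcd_dvd_right d s)).symm
  have hv1 : 1 ≤ v := Nat.div_pos (Nat.le_of_dvd hs (Nat.gcd_dvd_right d s)) hg0
  have huv : v < u := by
    have h := hsd
    rw [hdu, hsv] at h
    exact Nat.lt_of_mul_lt_mul_right h
  set ρ := Nat.choose d s with hρdef
  set t : ℕ → ℕ := fun n => (n ^ 2 - n - 1) * Nat.choose (d / n) (s / n) with htdef
  set S := g.divisors.erase 1 with hSdef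
  -- top term
  have htop : 2 * t g ≤ ρ := by
    have := top_bound u v g hv1 huv hg2
    rw [← hdu, ← hsv] at this
    simpa [htdef, hudef, hvdef, mul_assoc] using this
  -- non-top terms
  have hsmall : ∀ n ∈ S.erase g, 2 * t n ≤ ρ / 2 ^ (n - 1) := by
    intro n hn
    have hng : n ≠ g := (Finset.mem_erase.1 hn).1
    have hn' := (Finset.mem_erase.1 hn).2
    have hn1 : n ≠ 1 := (Finset.mem_erase.1 hn').1
    have hdvd : n ∣ g := (Nat.mem_divisors.1 (Finset.mem_erase.1 hn').2).1
    have hnpos : 0 < n := Nat.pos_of_dvd_of_pos hdvd hg0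
    have hn2 : 2 ≤ n := by omega
    have hnlt : n < g := lt_of_le_of_ne (Nat.le_of_dvd hg0 hdvd) hng
    obtain ⟨m, hm⟩ := hdvd
    have hm2 : 2 ≤ m := by
      rcases m with _ | _ | m
      · simp at hm; omega
      · simp at hm; omega
      · omega
    have hdn : d / n = u * m := by
      have h : d = n * (u * m) := by rw [hdu, hm]; ring
      rw [h, Nat.mul_div_cancel_left _ hnpos]
    have hsn : s / n = v * m := by
      have h : s = n * (v * m) := by rw [hsv, hm]; ring
      rw [h, Nat.mul_div_cancel_left _ hnpos]
    have hchain := chain_three u v m hv1 huv (by omega) (m * (n - 1))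
    have hidx : m + m * (n - 1) = g := by
      rcases n with _ | n
      · omega
      · rw [hm]; simp [Nat.succ_sub_one]; ring
    rw [hidx, ← hdu, ← hsv] at hchain
    have hpow : 9 ^ (n-1) ≤ 3 ^ (m * (n-1)) := by
      have h9 : (9:ℕ) ^ (n-1) = 3 ^ (2 * (n-1)) := by rw [pow_mul]; norm_num
      rw [h9]
      exact Nat.pow_le_pow_right (by norm_num) (Nat.mul_le_mul_right _ hm2)
    have key : (2 * (n^2 - n - 1) * 2 ^ (n-1)) * Nat.choose (u*m) (v*m) ≤ ρ :=
      calc (2 * (n^2 - n - 1) * 2 ^ (n-1)) * Nat.choose (u*m) (v*m)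
          ≤ 9 ^ (n-1) * Nat.choose (u*m) (v*m) :=
            Nat.mul_le_mul_right _ (arith_pow9 n hn2)
        _ ≤ 3 ^ (m * (n-1)) * Nat.choose (u*m) (v*m) := Nat.mul_le_mul_right _ hpow
        _ ≤ ρ := hchain
    rw [Nat.le_div_iff_mul_le (pow_pos (by norm_num : (0:ℕ) < 2) (n-1))]
    calc 2 * t n * 2 ^ (n-1) = (2 * (n^2 - n - 1) * 2 ^ (n-1)) * Nat.choose (d/n) (s/n) := by
          rw [htdef]; ring
      _ = (2 * (n^2 - n - 1) * 2 ^ (n-1)) * Nat.choose (u*m) (v*m) := by rw [hdn, hsn]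
      _ ≤ ρ := key
  -- assemble
  have hgS : g ∈ S := Finset.mem_erase.2 ⟨by omega, Nat.mem_divisors_self g (by omega)⟩
  have hsplit : t g + ∑ n ∈ S.erase g, t n = ∑ n ∈ S, t n :=
    Finset.add_sum_erase S t hgS
  have hsub : S.erase g ⊆ Finset.Icc 2 (g - 1) := by
    intro n hn
    have hng : n ≠ g := (Finset.mem_erase.1 hn).1
    have hn' := (Finset.mem_erase.1 hn).2
    have hn1 : n ≠ 1 := (Finset.mem_erase.1 hn').1
    have hdvd : n ∣ g := (Nat.mem_divisors.1 (Finset.mem_erase.1 hn').2).1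
    have hnpos : 0 < n := Nat.pos_of_dvd_of_pos hdvd hg0
    have hnle : n ≤ g := Nat.le_of_dvd hg0 hdvd
    exact Finset.mem_Icc.2 ⟨by omega, by omega⟩
  have hrest : ∑ n ∈ S.erase g, 2 * t n ≤ ρ := by
    calc ∑ n ∈ S.erase g, 2 * t n ≤ ∑ n ∈ S.erase g, ρ / 2 ^ (n-1) :=
          Finset.sum_le_sum hsmall
      _ ≤ ∑ n ∈ Finset.Icc 2 (g-1), ρ / 2 ^ (n-1) :=
          Finset.sum_le_sum_of_subset hsub
      _ ≤ ρ := by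
          have := halving_sum ρ (g - 2)
          have e : g - 2 + 1 = g - 1 := by omega
          rw [e] at this
          exact le_trans (Nat.le_add_right _ _) this
  have htotal : 2 * (t g + ∑ n ∈ S.erase g, t n) ≤ 2 * ρ := by
    have h2 : 2 * ∑ n ∈ S.erase g, t n = ∑ n ∈ S.erase g, 2 * t n := by
      rw [Finset.mul_sum]
    omega
  have hfin : t g + ∑ n ∈ S.erase g, t n ≤ ρ :=
    Nat.le_of_mul_le_mul_left htotal (by norm_num)
  calc ∑ n ∈ S, t n = t g + ∑ n ∈ S.erase g, t n := hsplit.symm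
    _ ≤ ρ := hfin
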